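/- arXiv:0911.3803 — 4 statements merged into one kernel-verified Lean document; each statement's English description precedes it below -/
import Mathlib

section
/- Let K be the complete bipartite graph K_{2,∞} with one partition class of size 2 and the other countably infinite, and let K' be the graph obtained from K by deleting one edge. Then K and K' are weak twins: they are not isomorphic, yet there exist injective graph homomorphisms K → K' and K' → K. -/
/-- The complete bipartite graph `K_{2,∞}`, with one partition class of size two and
the other countably infinite. -/
def K2inf : SimpleGraph (Fin 2 ⊕ ℕ) := completeBipartiteGraph (Fin 2) ℕ

/-- `K_{2,∞}` minus one edge. -/
def K2infMinusEdge : SimpleGraph (Fin 2 ⊕ ℕ) :=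
  K2inf.deleteEdges {s(Sum.inl 0, Sum.inr 0)}

lemma adj_K2inf (u v : Fin 2 ⊕ ℕ) :
    K2inf.Adj u v ↔ (u.isLeft ∧ v.isRight ∨ u.isRight ∧ v.isLeft) := Iff.rfl

lemma adj_K2infMinusEdge (u v : Fin 2 ⊕ ℕ) :
    K2infMinusEdge.Adj u v ↔ K2inf.Adj u v ∧ s(u, v) ≠ s(Sum.inl 0, Sum.inr 0) := by
  simp [K2infMinusEdge, SimpleGraph.deleteEdges_adj]

lemma unique_nbr : ∀ w, K2infMinusEdge.Adj (Sum.inr 0) w → w = Sum.inl 1 := by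
  intro w hw
  rw [adj_K2infMinusEdge] at hw
  obtain ⟨h1, h2⟩ := hw
  rcases w with a | b
  · rw [adj_K2inf] at h1
    fin_cases a
    · exfalso; exact h2 (by rw [Sym2.eq_swap]; rfl)
    · rfl
  · rw [adj_K2inf] at h1; simp at h1

/-- `K_{2,∞}` and `K_{2,∞}` minus an edge are weak twins: not isomorphic, but with
injective graph homomorphisms in both directions. -/
theorem K2inf_deleteEdge_weakTwins :
    ¬ Nonempty (K2inf ≃g K2infMinusEdge) ∧
    (∃ f : K2inf →g K2infMinusEdge, Function.Injective f) ∧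
    (∃ g : K2infMinusEdge →g K2inf, Function.Injective g) := by
  refine ⟨?_, ?_, ?_⟩
  · rintro ⟨e⟩
    set v := e.symm (Sum.inr 0) with hv
    -- v has two distinct neighbors in K2inf
    have two : ∃ w1 w2 : Fin 2 ⊕ ℕ, w1 ≠ w2 ∧ K2inf.Adj v w1 ∧ K2inf.Adj v w2 := by
      rcases v with a | b
      · exact ⟨Sum.inr 0, Sum.inr 1, by simp, by rw [adj_K2inf]; simp,
          by rw [adj_K2inf]; simp⟩
      · exact ⟨Sum.inl 0, Sum.inl 1, by simp, by rw [adj_K2inf]; simp,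
          by rw [adj_K2inf]; simp⟩
    obtain ⟨w1, w2, hne, h1, h2⟩ := two
    have a1 : K2infMinusEdge.Adj (Sum.inr 0) (e w1) := by
      have := e.map_adj_iff.mpr h1
      rwa [hv, e.apply_symm_apply] at this
    have a2 : K2infMinusEdge.Adj (Sum.inr 0) (e w2) := by
      have := e.map_adj_iff.mpr h2
      rwa [hv, e.apply_symm_apply] at this
    have := unique_nbr _ a1
    have := unique_nbr _ a2
    exact hne (e.injective (by rw [unique_nbr _ a1, unique_nbr _ a2]))
  · refine ⟨⟨Sum.map id Nat.succ, ?_⟩, ?_⟩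
    · intro u w h
      rw [adj_K2inf] at h
      rw [adj_K2infMinusEdge, adj_K2inf]
      rcases u with a | m <;> rcases w with b | n <;> simp_all [Sym2.eq_iff]
    · intro u w h
      have h' : Sum.map id Nat.succ u = Sum.map id Nat.succ w := h
      rcases u with a | m <;> rcases w with b | n <;> simp_all [Sum.map]
  · exact ⟨⟨id, fun {u w} h => (adj_K2infMinusEdge u w).mp h |>.1⟩, fun a b h => h⟩
end

section
/- The complete bipartite graph K_{2,∞} has no strong twin: every graph H for which there exist graph embeddings K_{2,∞} → H and H → K_{2,∞} is isomorphic to K_{2,∞}. -/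
/-- `K_{2,∞}` has no strong twin: any graph that embeds into `K_{2,∞}` and into
which `K_{2,∞}` embeds is isomorphic to `K_{2,∞}`. -/
theorem K2inf_no_strongTwin {W : Type*} (H : SimpleGraph W)
    (h₁ : Nonempty (K2inf ↪g H)) (h₂ : Nonempty (H ↪g K2inf)) :
    Nonempty (H ≃g K2inf) := by
  classical
  obtain ⟨f⟩ := h₁
  obtain ⟨g⟩ := h₂
  let e : K2inf ↪g K2inf := g.comp f
  have ecomp : ∀ x, g (f x) = e x := fun _ => rfl
  -- `e` maps left vertices to left vertices
  have key : ∀ i : Fin 2, ∃ j : Fin 2, e (Sum.inl i) = Sum.inl j := by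
    intro i
    rcases hx : e (Sum.inl i) with j | n
    · exact ⟨j, rfl⟩
    · exfalso
      have hm : ∀ m : ℕ, ∃ j : Fin 2, e (Sum.inr m) = Sum.inl j := by
        intro m
        have hadj : K2inf.Adj (e (Sum.inl i)) (e (Sum.inr m)) :=
          e.map_rel_iff.mpr (by simp [K2inf])
        rw [hx] at hadj
        rcases hy : e (Sum.inr m) with j | k
        · exact ⟨j, rfl⟩
        · rw [hy] at hadj; simp [K2inf] at hadj
      obtain ⟨m, m', hne, hmm⟩ :=
        Finite.exists_ne_map_eq_of_infinite (fun m : ℕ => (hm m).choose)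
      apply hne
      have : e (Sum.inr m) = e (Sum.inr m') := by
        rw [(hm m).choose_spec, (hm m').choose_spec, hmm]
      simpa using e.injective this
  obtain ⟨a, ha⟩ := key 0
  obtain ⟨b, hb⟩ := key 1
  have hab : a ≠ b := by
    intro h
    have : e (Sum.inl 0) = e (Sum.inl 1) := by rw [ha, hb, h]
    simpa using e.injective this
  -- every left vertex is in the range of `g`
  have surj_inl : ∀ i : Fin 2, ∃ w : W, g w = Sum.inl i := by
    intro i
    have hi : i = a ∨ i = b := by
      have h1 : a.val ≠ b.val := fun h => hab (Fin.ext h)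
      have := a.isLt; have := b.isLt; have := i.isLt
      rcases Nat.lt_or_ge i.val a.val with h | h
      · right; apply Fin.ext; omega
      · rcases Nat.eq_or_lt_of_le h with h' | h'
        · left; exact (Fin.ext h'.symm)
        · right; apply Fin.ext; omega
    rcases hi with rfl | rfl
    · exact ⟨f (Sum.inl 0), by rw [ecomp]; exact ha⟩
    · exact ⟨f (Sum.inl 1), by rw [ecomp]; exact hb⟩
  -- `e` maps right vertices to right vertices
  have eright : ∀ m : ℕ, ∃ n : ℕ, e (Sum.inr m) = Sum.inr n := by
    intro m
    have hadj : K2inf.Adj (e (Sum.inl 0)) (e (Sum.inr m)) :=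
      e.map_rel_iff.mpr (by simp [K2inf])
    rw [ha] at hadj
    rcases hy : e (Sum.inr m) with j | n
    · rw [hy] at hadj; simp [K2inf] at hadj
    · exact ⟨n, rfl⟩
  set P : W → Prop := fun w => ∃ i : Fin 2, g w = Sum.inl i with hP
  have hnotP : ∀ w, ¬ P w ↔ ∃ n : ℕ, g w = Sum.inr n := by
    intro w
    rcases hw : g w with i | n
    · simp [hP, hw]
      exact (by decide : ∀ i : Fin 2, ¬i = 0 → i = 1) i
    · simp [hP, hw]
  -- the left part of `W`
  have eqL : {w // P w} ≃ Fin 2 := by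
    refine Equiv.ofBijective (fun w => Sum.elim id (fun _ => 0) (g w.1)) ⟨?_, ?_⟩
    · rintro ⟨w, i, hi⟩ ⟨w', i', hi'⟩ h
      simp only [hi, hi', Sum.elim_inl, id] at h
      exact Subtype.ext (g.injective (by rw [hi, hi', h]))
    · intro i
      obtain ⟨w, hw⟩ := surj_inl i
      exact ⟨⟨w, ⟨i, hw⟩⟩, by simp [hw]⟩
  -- the right part of `W` is countably infinite
  haveI : Countable W := g.injective.countable
  haveI : Infinite {w // ¬ P w} := by
    refine Infinite.of_injective
      (fun m : ℕ => (⟨f (Sum.inr m), ?_⟩ : {w // ¬ P w})) ?_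
    · rw [hnotP]
      obtain ⟨n, hn⟩ := eright m
      exact ⟨n, by rw [ecomp]; exact hn⟩
    · intro m m' h
      have := f.injective (congrArg Subtype.val h)
      simpa using this
  obtain ⟨d⟩ := nonempty_denumerable {w // ¬ P w}
  have eqR : {w // ¬ P w} ≃ ℕ := @Denumerable.eqv _ d
  let φ : W ≃ (Fin 2 ⊕ ℕ) := (Equiv.sumCompl P).symm.trans (Equiv.sumCongr eqL eqR)
  refine ⟨⟨φ, ?_⟩⟩
  intro u v
  rw [show H.Adj u v ↔ K2inf.Adj (g u) (g v) from g.map_rel_iff.symm]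
  have hφ : ∀ w, (P w → ∃ i, φ w = Sum.inl i) ∧ (¬ P w → ∃ n, φ w = Sum.inr n) := by
    intro w
    constructor
    · intro h
      refine ⟨eqL ⟨w, h⟩, ?_⟩
      simp [φ, Equiv.sumCompl_symm_apply_of_pos h]
    · intro h
      refine ⟨eqR ⟨w, h⟩, ?_⟩
      simp [φ, Equiv.sumCompl_symm_apply_of_neg h]
  by_cases hu : P u <;> by_cases hv : P v
  · obtain ⟨i, hi⟩ := (hφ u).1 hu
    obtain ⟨j, hj⟩ := (hφ v).1 hv
    obtain ⟨i', hi'⟩ := hu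
    obtain ⟨j', hj'⟩ := hv
    rw [hi, hj, hi', hj']; simp [K2inf]
  · obtain ⟨i, hi⟩ := (hφ u).1 hu
    obtain ⟨n, hn⟩ := (hφ v).2 hv
    obtain ⟨i', hi'⟩ := hu
    obtain ⟨n', hn'⟩ := (hnotP v).mp hv
    rw [hi, hn, hi', hn']; simp [K2inf]
  · obtain ⟨n, hn⟩ := (hφ u).2 hu
    obtain ⟨i, hi⟩ := (hφ v).1 hv
    obtain ⟨n', hn'⟩ := (hnotP u).mp hu
    obtain ⟨i', hi'⟩ := hv
    rw [hn, hi, hn', hi']; simp [K2inf]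
  · obtain ⟨n, hn⟩ := (hφ u).2 hu
    obtain ⟨m, hm⟩ := (hφ v).2 hv
    obtain ⟨n', hn'⟩ := (hnotP u).mp hu
    obtain ⟨m', hm'⟩ := (hnotP v).mp hv
    rw [hn, hm, hn', hm']; simp [K2inf]
end

section
/- The infinite star has no connected weak twin: every connected graph H for which there exist injective graph homomorphisms from the infinite star to H and from H to the infinite star is isomorphic to the infinite star. -/
/-- The infinite star `K_{1,∞}`: one centre vertex joined to countably infinitely
many leaves, and no other edges. -/
def InfStar : SimpleGraph (Unit ⊕ ℕ) := completeBipartiteGraph Unit ℕ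

/-- The infinite star has no connected weak twin: every connected graph `H` with
injective graph homomorphisms from the star to `H` and from `H` to the star is
isomorphic to the star. -/
theorem infStar_no_connected_weakTwin {W : Type*} (H : SimpleGraph W)
    (hHc : H.Connected)
    (h₁ : ∃ f : InfStar →g H, Function.Injective f)
    (h₂ : ∃ g : H →g InfStar, Function.Injective g) :
    Nonempty (H ≃g InfStar) := by
  classical
  obtain ⟨f, hf⟩ := h₁
  obtain ⟨g, hg⟩ := h₂
  haveI : Infinite W := Infinite.of_injective f hf
  haveI : Countable W := hg.countable
  -- every edge of H has an endpoint mapping to the centre of the star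
  have hkey : ∀ {a b : W}, H.Adj a b → g a = Sum.inl () ∨ g b = Sum.inl () := by
    intro a b hab
    have hadj := g.map_adj hab
    rcases hga : g a with u | n
    · exact Or.inl (by cases u; rfl)
    · rcases hgb : g b with u | m
      · exact Or.inr (by cases u; rfl)
      · rw [hga, hgb] at hadj
        simp [InfStar, completeBipartiteGraph] at hadj
  -- an edge exists
  obtain ⟨a₀, b₀, hab₀⟩ : ∃ a b : W, H.Adj a b := by
    obtain ⟨a, b, hab⟩ := exists_pair_ne W
    obtain ⟨p⟩ := hHc a b
    cases p with
    | nil => exact absurd rfl hab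
    | cons h _ => exact ⟨_, _, h⟩
  -- the centre w0
  obtain ⟨w0, hw0⟩ : ∃ w0 : W, g w0 = Sum.inl () := by
    rcases hkey hab₀ with h | h
    exacts [⟨a₀, h⟩, ⟨b₀, h⟩]
  have hedge : ∀ {a b : W}, H.Adj a b → a = w0 ∨ b = w0 := by
    intro a b hab
    exact (hkey hab).imp (fun h => hg (h.trans hw0.symm)) (fun h => hg (h.trans hw0.symm))
  have hadjw0 : ∀ w : W, w ≠ w0 → H.Adj w0 w := by
    intro w hw
    obtain ⟨p⟩ := hHc w w0
    cases p with
    | nil => exact absurd rfl hw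
    | cons h _ =>
      rcases hedge h with h1 | h2
      · exact absurd h1 hw
      · exact h2 ▸ h.symm
  have hchar : ∀ a b : W, H.Adj a b ↔ ((a = w0 ∧ b ≠ w0) ∨ (b = w0 ∧ a ≠ w0)) := by
    intro a b
    constructor
    · intro hab
      rcases hedge hab with rfl | rfl
      · exact Or.inl ⟨rfl, fun h => H.irrefl (h ▸ hab)⟩
      · exact Or.inr ⟨rfl, fun h => H.irrefl (h ▸ hab)⟩
    · rintro (⟨rfl, hb⟩ | ⟨rfl, ha⟩)
      · exact hadjw0 b hb
      · exact (hadjw0 a ha).symm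
  -- build the equivalence
  haveI : Infinite {w : W // w ≠ w0} := by
    have h1 : ({w0}ᶜ : Set W).Infinite := (Set.finite_singleton w0).infinite_compl
    haveI := h1.to_subtype
    exact Infinite.of_injective
      (fun w : ({w0}ᶜ : Set W) => (⟨w.1, w.2⟩ : {w : W // w ≠ w0}))
      (fun x y h => Subtype.ext (congrArg Subtype.val h))
  obtain ⟨e2⟩ : Nonempty ({w : W // w ≠ w0} ≃ ℕ) := by
    obtain ⟨d⟩ := nonempty_denumerable {w : W // w ≠ w0}
    exact ⟨d.eqv⟩
  let e1 : {w : W // w = w0} ≃ Unit :=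
    { toFun := fun _ => ()
      invFun := fun _ => ⟨w0, rfl⟩
      left_inv := fun x => Subtype.ext x.2.symm
      right_inv := fun _ => rfl }
  let φ : W ≃ (Unit ⊕ ℕ) :=
    (Equiv.sumCompl (· = w0)).symm.trans (Equiv.sumCongr e1 e2)
  have hφ : ∀ a : W, (a = w0 ∧ φ a = Sum.inl ()) ∨ (a ≠ w0 ∧ ∃ n, φ a = Sum.inr n) := by
    intro a
    by_cases h : a = w0
    · left
      refine ⟨h, ?_⟩
      simp [φ, Equiv.sumCompl, h]
    · right
      refine ⟨h, ⟨e2 ⟨a, h⟩, ?_⟩⟩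
      simp [φ, Equiv.sumCompl, h]
  refine ⟨⟨φ, ?_⟩⟩
  intro a b
  show InfStar.Adj (φ a) (φ b) ↔ H.Adj a b
  rw [hchar a b]
  rcases hφ a with ⟨ha, hφa⟩ | ⟨ha, n, hφa⟩ <;> rcases hφ b with ⟨hb, hφb⟩ | ⟨hb, m, hφb⟩ <;>
    rw [hφa, hφb] <;> simp [InfStar, completeBipartiteGraph, ha, hb]
end

section
/- If a graph G has a weak twin, then G is isomorphic to a proper subgraph of itself; more precisely, there exists an injective graph homomorphism from G to G that is not a graph isomorphism. -/
/-- Two graphs are weak twins if they are non-isomorphic and there are injective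
graph homomorphisms in both directions. -/
def SimpleGraph.WeakTwins {V W : Type*} (G : SimpleGraph V) (H : SimpleGraph W) : Prop :=
  ¬ Nonempty (G ≃g H) ∧ (∃ f : G →g H, Function.Injective f) ∧
    (∃ g : H →g G, Function.Injective g)

/-- If a graph has a weak twin, then it admits an injective self-homomorphism that
is not a graph isomorphism (so it is isomorphic to a proper subgraph of itself). -/
theorem weakTwin_self_embedding {V W : Type*} (G : SimpleGraph V)
    (H : SimpleGraph W) (h : G.WeakTwins H) :
    ∃ f : G →g G, Function.Injective f ∧ ¬ ∃ e : G ≃g G, ⇑e = ⇑f := by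
  obtain ⟨hne, ⟨f, hf⟩, ⟨g, hg⟩⟩ := h
  refine ⟨g.comp f, hg.comp hf, ?_⟩
  rintro ⟨e, he⟩
  apply hne
  have hsurj : Function.Surjective f := by
    intro w
    obtain ⟨a, ha⟩ := e.surjective (g w)
    refine ⟨a, hg ?_⟩
    have : (g.comp f) a = g w := by rw [← he]; exact ha
    simpa using this
  refine ⟨⟨Equiv.ofBijective f ⟨hf, hsurj⟩, ?_⟩⟩
  intro a b
  show H.Adj (f a) (f b) ↔ G.Adj a b
  constructor
  · intro hab
    have h1 := g.map_adj hab
    have h2 : G.Adj (e a) (e b) := by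
      rw [he]; simpa using h1
    exact e.map_adj_iff.mp h2
  · exact f.map_adj
end
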